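/- Let (S_n) be the animal walk started at 0. For all integers y ≥ 1 and x ≥ 0, the probability that S enters the half-line (−∞,−y] strictly before reaching the singleton {x} equals x/(x+y+1). (Here the hitting time of {x} is the first n ≥ 0 with S_n = x, and of (−∞,−y] the first n ≥ 0 with S_n ≤ −y.) -/

import Mathlib

open MeasureTheory

/-- The animal walk: S 0 = 0 and S n = ξ 0 + … + ξ (n-1). -/
def walk {Ω : Type*} (ξ : ℕ → Ω → ℤ) (n : ℕ) (ω : Ω) : ℤ :=
  ∑ i ∈ Finset.range n, ξ i ω

/-- The step distribution μ of the animal walk, evaluated on the singleton {z}: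
μ({1}) = 2/3, μ({−k}) = 2^{−k}/3 for k ≥ 1, and 0 otherwise. -/
noncomputable def animalStepLaw (z : ℤ) : ENNReal :=
  if z = 1 then 2/3 else if z < 0 then (2 : ENNReal) ^ z / 3 else 0

namespace Animal

lemma geo_half : ∑' n : ℕ, (2:ENNReal)⁻¹ ^ (n+1) = 1 := by
  have h := ENNReal.tsum_geometric (2:ENNReal)⁻¹
  have h2 : (1 - (2:ENNReal)⁻¹)⁻¹ = 2 := by
    rw [show (1 - (2:ENNReal)⁻¹) = 2⁻¹ by
      rw [ENNReal.sub_eq_of_eq_add (by norm_num)]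
      rw [ENNReal.inv_two_add_inv_two]]
    simp
  rw [h2] at h
  calc ∑' n : ℕ, (2:ENNReal)⁻¹ ^ (n+1) = ∑' n : ℕ, (2:ENNReal)⁻¹ * 2⁻¹ ^ n := by
        congr 1; funext n; rw [pow_succ, mul_comm]
    _ = 2⁻¹ * ∑' n : ℕ, (2:ENNReal)⁻¹ ^ n := ENNReal.tsum_mul_left
    _ = 2⁻¹ * 2 := by rw [h]
    _ = 1 := by rw [ENNReal.inv_mul_cancel] <;> norm_num

lemma stepLaw_negSucc (n : ℕ) :
    animalStepLaw (Int.negSucc n) = (2:ENNReal)⁻¹ ^ (n+1) / 3 := by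
  have h1 : (Int.negSucc n) ≠ 1 := by
    intro h; cases h
  have h2 : (Int.negSucc n) < 0 := Int.negSucc_lt_zero n
  unfold animalStepLaw
  rw [if_neg h1, if_pos h2, zpow_negSucc, ← ENNReal.inv_pow]

lemma stepLaw_nat (n : ℕ) : animalStepLaw (n : ℤ) = if (n:ℤ) = 1 then 2/3 else 0 := by
  unfold animalStepLaw
  split_ifs with h1 h2 <;> first | rfl | omega

lemma sum_mu : ∑' z : ℤ, animalStepLaw z = 1 := by
  have hrec : (fun z : ℤ => animalStepLaw z)
      = Int.rec (fun n : ℕ => animalStepLaw (n:ℤ)) (fun n : ℕ => animalStepLaw (Int.negSucc n)) := by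
    funext z; cases z <;> rfl
  rw [hrec, tsum_int_rec ENNReal.summable ENNReal.summable]
  have h1 : ∑' n : ℕ, animalStepLaw (n:ℤ) = 2/3 := by
    rw [tsum_eq_single 1 (by intro n hn; rw [stepLaw_nat]; simp; omega)]
    rw [stepLaw_nat]; norm_num
  have h2 : ∑' n : ℕ, animalStepLaw (Int.negSucc n) = 1/3 := by
    simp_rw [stepLaw_negSucc, div_eq_mul_inv]
    rw [ENNReal.tsum_mul_right, geo_half, one_mul]
  rw [h1, h2, ENNReal.div_add_div_same]
  have h3 : (2:ENNReal)+1 = 3 := by norm_num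
  rw [h3]
  exact ENNReal.div_self (by norm_num) (by norm_num)

end Animal

namespace Animal

/-- The harmonic function for the exit problem. -/
noncomputable def hfun (x y : ℕ) (b : ℤ) : ENNReal :=
  if b ≤ -(y:ℤ) then 1 else (((x:ℤ) - b).toNat : ENNReal) / ((x + y + 1 : ℕ) : ENNReal)

lemma Dnz (x y : ℕ) : ((x + y + 1 : ℕ) : ENNReal) ≠ 0 := by
  simp

lemma Dnt (x y : ℕ) : ((x + y + 1 : ℕ) : ENNReal) ≠ ⊤ := by
  simp

lemma hfun_le_one (x y : ℕ) (b : ℤ) : hfun x y b ≤ 1 := by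
  unfold hfun
  split_ifs with h
  · exact le_refl 1
  · apply ENNReal.div_le_of_le_mul
    rw [one_mul, Nat.cast_le]
    omega

/-- Core geometric-sum identity. -/
lemma T_lemma (M : ℕ) : ∀ c : ℕ,
    ∑' n : ℕ, (2:ENNReal)⁻¹ ^ (n+1) *
      (if n + 1 < M + 1 then ((c + n + 1 : ℕ) : ENNReal) / ((c + M + 2 : ℕ) : ENNReal) else 1)
    = ((c + 2 : ℕ) : ENNReal) / ((c + M + 2 : ℕ) : ENNReal) := by
  induction M with
  | zero =>
    intro c
    have h1 : ∀ n : ℕ, ¬ (n + 1 < 0 + 1) := by omega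
    simp only [h1, if_false, mul_one]
    rw [geo_half]
    rw [eq_comm]
    exact ENNReal.div_self (by simp) (by simp)
  | succ M ih =>
    intro c
    rw [tsum_eq_zero_add' ENNReal.summable]
    have h0 : (0 + 1 < M + 1 + 1) := by omega
    rw [if_pos h0]
    have hsh : ∀ n : ℕ, (2:ENNReal)⁻¹ ^ (n+1+1) *
        (if n + 1 + 1 < M + 1 + 1 then ((c + (n+1) + 1 : ℕ) : ENNReal) / ((c + (M+1) + 2 : ℕ) : ENNReal) else 1)
      = 2⁻¹ * ((2:ENNReal)⁻¹ ^ (n+1) *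
        (if n + 1 < M + 1 then (((c+1) + n + 1 : ℕ) : ENNReal) / (((c+1) + M + 2 : ℕ) : ENNReal) else 1)) := by
      intro n
      have e1 : c + (n+1) + 1 = (c+1) + n + 1 := by omega
      have e2 : c + (M+1) + 2 = (c+1) + M + 2 := by omega
      have e3 : (n + 1 + 1 < M + 1 + 1) ↔ (n + 1 < M + 1) := by omega
      rw [e1, e2]
      rw [show (2:ENNReal)⁻¹ ^ (n+1+1) = 2⁻¹ * 2⁻¹ ^ (n+1) by ring]
      rw [mul_assoc]
      congr 1
      congr 1
      simp only [e3]
    simp only [hsh]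
    rw [ENNReal.tsum_mul_left, ih (c+1)]
    -- goal: 2⁻¹^(0+1) * ((c+1)/(c+M+3)) + 2⁻¹ * ((c+3)/(c+M+3)) = (c+2)/(c+M+3)
    have e4 : ((c+1) + M + 2 : ℕ) = (c + (M+1) + 2 : ℕ) := by omega
    have e5 : ((c+1) + 2 : ℕ) = (c + 3 : ℕ) := by omega
    rw [e4, e5, pow_one]
    rw [← mul_add, ENNReal.div_add_div_same]
    have e6 : ((c + 1 : ℕ) : ENNReal) + ((c + 3 : ℕ) : ENNReal) = 2 * ((c+2 : ℕ) : ENNReal) := by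
      push_cast; ring
    rw [e6, ← mul_div_assoc, ← mul_assoc, ENNReal.inv_mul_cancel (by norm_num) (by norm_num), one_mul]

end Animal

namespace Animal

lemma harmonic (x y : ℕ) (hy : 1 ≤ y) (a : ℤ) (h1 : -(y:ℤ) < a) (h2 : a < x) :
    ∑' z : ℤ, animalStepLaw z * hfun x y (a + z) = hfun x y a := by
  set c : ℕ := ((x:ℤ) - a).toNat with hc
  set M : ℕ := (a + y - 1).toNat with hM
  have hcz : (c : ℤ) = (x:ℤ) - a := by rw [hc]; omega
  have hMz : (M : ℤ) = a + y - 1 := by rw [hM]; omega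
  have hc1 : 1 ≤ c := by omega
  have hD : c + M + 2 = x + y + 1 := by omega
  have hrec : (fun z : ℤ => animalStepLaw z * hfun x y (a + z))
      = Int.rec (fun n : ℕ => animalStepLaw (n:ℤ) * hfun x y (a + n))
        (fun n : ℕ => animalStepLaw (Int.negSucc n) * hfun x y (a + Int.negSucc n)) := by
    funext z; cases z <;> rfl
  rw [hrec, tsum_int_rec ENNReal.summable ENNReal.summable]
  have hpos : ∑' n : ℕ, animalStepLaw (n:ℤ) * hfun x y (a + n)
      = 2/3 * (((c - 1 : ℕ) : ENNReal) / ((x + y + 1 : ℕ) : ENNReal)) := by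
    rw [tsum_eq_single 1 (by intro n hn; rw [stepLaw_nat, if_neg (by omega)]; ring)]
    rw [stepLaw_nat, if_pos (by norm_num)]
    congr 1
    unfold hfun
    rw [if_neg (by omega)]
    congr 2
    omega
  have hneg : ∑' n : ℕ, animalStepLaw (Int.negSucc n) * hfun x y (a + Int.negSucc n)
      = 3⁻¹ * (((c + 2 : ℕ) : ENNReal) / ((c + M + 2 : ℕ) : ENNReal)) := by
    have key : ∀ n : ℕ, animalStepLaw (Int.negSucc n) * hfun x y (a + Int.negSucc n)
        = 3⁻¹ * ((2:ENNReal)⁻¹ ^ (n+1) *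
          (if n + 1 < M + 1 then ((c + n + 1 : ℕ) : ENNReal) / ((c + M + 2 : ℕ) : ENNReal) else 1)) := by
      intro n
      rw [stepLaw_negSucc]
      have hns : a + Int.negSucc n = a - (n+1) := by
        rw [Int.negSucc_eq]; push_cast; ring
      rw [hns]
      unfold hfun
      by_cases hlow : a - ((n:ℤ)+1) ≤ -(y:ℤ)
      · rw [if_pos hlow, if_neg (by omega), mul_one, mul_one, div_eq_mul_inv, mul_comm]
      · rw [if_neg hlow, if_pos (by omega)]
        have e1 : (((x:ℤ) - (a - ((n:ℤ)+1))).toNat : ℕ) = c + n + 1 := by omega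
        rw [e1, show (x + y + 1 : ℕ) = c + M + 2 from hD.symm]
        rw [div_eq_mul_inv, mul_comm ((2:ENNReal)⁻¹ ^ (n+1)) _, mul_assoc, mul_comm (3:ENNReal)⁻¹ _, mul_assoc]
    simp only [key]
    rw [ENNReal.tsum_mul_left, T_lemma M c]
  rw [hpos, hneg, hD]
  have hfa : hfun x y a = ((c : ℕ) : ENNReal) / ((x + y + 1 : ℕ) : ENNReal) := by
    unfold hfun
    rw [if_neg (by omega)]
  rw [hfa]
  obtain ⟨k, hk⟩ : ∃ k, c = k + 1 := ⟨c - 1, by omega⟩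
  rw [hk, show (k + 1 - 1 : ℕ) = k by omega]
  rw [← mul_div_assoc, ← mul_div_assoc, ENNReal.div_add_div_same]
  congr 1
  have e3 : ((k + 1 + 2 : ℕ) : ENNReal) = (k:ENNReal) + 3 := by push_cast; ring
  have e4 : ((k + 1 : ℕ) : ENNReal) = (k:ENNReal) + 1 := by push_cast; ring
  rw [e3, e4]
  rw [show (2:ENNReal)/3 = 3⁻¹ * 2 by rw [div_eq_mul_inv, mul_comm]]
  rw [mul_assoc, ← mul_add]
  rw [show (2:ENNReal) * (k:ENNReal) + ((k:ENNReal) + 3) = 3 * ((k:ENNReal) + 1) by ring]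
  rw [← mul_assoc, ENNReal.inv_mul_cancel (by norm_num) (by norm_num), one_mul]

end Animal

namespace Animal

open Classical in
/-- walk value at time m of a length-n step tuple -/
def wOf {n : ℕ} (v : Fin n → ℤ) (m : ℕ) : ℤ := ∑ i : Fin n, if (i:ℕ) < m then v i else 0

noncomputable def Wt {n : ℕ} (v : Fin n → ℤ) : ENNReal := ∏ i, animalStepLaw (v i)

def okP (x y : ℕ) (b : ℤ) : Prop := -(y:ℤ) < b ∧ b ≠ (x:ℤ)

def aliveP (x y : ℕ) {n : ℕ} (v : Fin n → ℤ) : Prop := ∀ m ≤ n, okP x y (wOf v m)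

def winP (x y : ℕ) {n : ℕ} (v : Fin n → ℤ) : Prop :=
  ∃ j, j ≤ n ∧ wOf v j ≤ -(y:ℤ) ∧ ∀ m < j, okP x y (wOf v m)

lemma wOf_zero {n : ℕ} (v : Fin n → ℤ) : wOf v 0 = 0 := by
  unfold wOf; simp

lemma wOf_ge {n : ℕ} (v : Fin n → ℤ) {m : ℕ} (h : n ≤ m) : wOf v m = ∑ i, v i := by
  unfold wOf
  apply Finset.sum_congr rfl
  intro i _
  rw [if_pos (lt_of_lt_of_le i.isLt h)]

lemma wOf_snoc {n : ℕ} (v : Fin n → ℤ) (z : ℤ) {m : ℕ} (hm : m ≤ n) :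
    wOf (Fin.snoc v z) m = wOf v m := by
  unfold wOf
  rw [Fin.sum_univ_castSucc]
  have hlast : ¬ ((Fin.last n : Fin (n+1)) : ℕ) < m := by simp [Fin.last]; omega
  rw [if_neg hlast, add_zero]
  apply Finset.sum_congr rfl
  intro i _
  rw [Fin.snoc_castSucc]
  rfl

lemma wOf_snoc_succ {n : ℕ} (v : Fin n → ℤ) (z : ℤ) :
    wOf (Fin.snoc v z) (n+1) = wOf v n + z := by
  rw [wOf_ge _ (le_refl (n+1)), Fin.sum_univ_castSucc]
  simp only [Fin.snoc_castSucc, Fin.snoc_last]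
  rw [wOf_ge v (le_refl n)]

lemma wOf_succ {n : ℕ} (v : Fin n → ℤ) {m : ℕ} (hm : m < n) :
    wOf v (m+1) = wOf v m + v ⟨m, hm⟩ := by
  unfold wOf
  have hpt : ∀ i : Fin n, (if (i:ℕ) < m + 1 then v i else 0)
      = (if (i:ℕ) < m then v i else 0) + (if (i:ℕ) = m then v i else 0) := by
    intro i
    by_cases h1 : (i:ℕ) < m
    · rw [if_pos (by omega), if_pos h1, if_neg (by omega), add_zero]
    · by_cases h2 : (i:ℕ) = m
      · rw [if_pos (by omega), if_neg h1, if_pos h2, zero_add]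
      · rw [if_neg (by omega), if_neg h1, if_neg h2, add_zero]
  simp only [hpt]
  rw [Finset.sum_add_distrib]
  congr 1
  rw [Finset.sum_eq_single_of_mem (⟨m, hm⟩ : Fin n) (Finset.mem_univ _)]
  · rw [if_pos rfl]
  · intro i _ hne
    rw [if_neg (by simpa [Fin.ext_iff] using hne)]

lemma Wt_snoc {n : ℕ} (v : Fin n → ℤ) (z : ℤ) :
    Wt (Fin.snoc v z) = Wt v * animalStepLaw z := by
  unfold Wt
  rw [Fin.prod_univ_castSucc]
  simp only [Fin.snoc_castSucc, Fin.snoc_last]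

lemma mu_support {z : ℤ} (h : animalStepLaw z ≠ 0) : z = 1 ∨ z < 0 := by
  by_contra hc
  push_neg at hc
  apply h
  unfold animalStepLaw
  rw [if_neg hc.1, if_neg (by omega)]

lemma Wt_ne_zero {n : ℕ} {v : Fin n → ℤ} (h : Wt v ≠ 0) (i : Fin n) :
    animalStepLaw (v i) ≠ 0 := by
  intro h0
  apply h
  unfold Wt
  exact Finset.prod_eq_zero (Finset.mem_univ i) h0

lemma alive_lt {x y n : ℕ} (hx : 1 ≤ x) {v : Fin n → ℤ}
    (ha : aliveP x y v) (hw : Wt v ≠ 0) : ∀ m ≤ n, wOf v m < (x:ℤ) := by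
  intro m
  induction m with
  | zero => intro _; rw [wOf_zero]; exact_mod_cast hx
  | succ m ih =>
    intro hm
    have hmn : m < n := hm
    rw [wOf_succ v hmn]
    have hstep := mu_support (Wt_ne_zero hw ⟨m, hmn⟩)
    have hprev := ih (le_of_lt hmn)
    have hne := (ha (m+1) hm).2
    rcases hstep with h1 | h1
    · rw [h1]
      rw [wOf_succ v hmn, h1] at hne
      omega
    · omega

end Animal

namespace Animal

lemma not_winP_of_aliveP {x y : ℕ} {n : ℕ} {v : Fin n → ℤ} (ha : aliveP x y v) :
    ¬ winP x y v := by
  rintro ⟨j, hj, hlow, -⟩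
  have := (ha j hj).1
  omega

lemma winP_snoc {x y n : ℕ} (v : Fin n → ℤ) (z : ℤ) :
    winP x y (Fin.snoc v z) ↔ winP x y v ∨ (aliveP x y v ∧ wOf v n + z ≤ -(y:ℤ)) := by
  constructor
  · rintro ⟨j, hj, hlow, hpre⟩
    rcases Nat.lt_or_ge j (n+1) with hj1 | hj1
    · left
      have hjn : j ≤ n := by omega
      refine ⟨j, hjn, ?_, ?_⟩
      · rwa [wOf_snoc v z hjn] at hlow
      · intro m hm
        rw [← wOf_snoc v z (by omega : m ≤ n)]
        exact hpre m hm
    · right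
      have hje : j = n + 1 := by omega
      subst hje
      constructor
      · intro m hm
        rw [← wOf_snoc v z hm]
        exact hpre m (by omega)
      · rwa [wOf_snoc_succ] at hlow
  · rintro (⟨j, hj, hlow, hpre⟩ | ⟨ha, hlow⟩)
    · exact ⟨j, by omega, by rwa [wOf_snoc v z hj], fun m hm => by
        rw [wOf_snoc v z (by omega : m ≤ n)]; exact hpre m hm⟩
    · exact ⟨n+1, le_refl _, by rwa [wOf_snoc_succ], fun m hm => by
        rw [wOf_snoc v z (by omega : m ≤ n)]; exact ha m (by omega)⟩

lemma aliveP_snoc {x y n : ℕ} (v : Fin n → ℤ) (z : ℤ) :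
    aliveP x y (Fin.snoc v z) ↔ aliveP x y v ∧ okP x y (wOf v n + z) := by
  constructor
  · intro ha
    refine ⟨fun m hm => ?_, ?_⟩
    · rw [← wOf_snoc v z hm]; exact ha m (by omega)
    · rw [← wOf_snoc_succ]; exact ha (n+1) (le_refl _)
  · rintro ⟨ha, hok⟩
    intro m hm
    rcases Nat.lt_or_ge m (n+1) with h1 | h1
    · rw [wOf_snoc v z (by omega : m ≤ n)]; exact ha m (by omega)
    · have : m = n+1 := by omega
      subst this
      rwa [wOf_snoc_succ]

open Classical in
noncomputable def WinS (x y n : ℕ) : ENNReal :=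
  ∑' v : Fin n → ℤ, if winP x y v then Wt v else 0

open Classical in
noncomputable def AliveH (x y n : ℕ) : ENNReal :=
  ∑' v : Fin n → ℤ, if aliveP x y v then Wt v * hfun x y (wOf v n) else 0

open Classical in
noncomputable def AliveS (x y n : ℕ) : ENNReal :=
  ∑' v : Fin n → ℤ, if aliveP x y v then Wt v else 0

lemma tsum_snoc {n : ℕ} (F : (Fin (n+1) → ℤ) → ENNReal) :
    ∑' u, F u = ∑' (v : Fin n → ℤ), ∑' (z : ℤ), F (Fin.snoc v z) := by
  calc ∑' u, F u = ∑' c : ℤ × (Fin n → ℤ), F (Fin.snoc c.2 c.1) := by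
        rw [← (Fin.snocEquiv (fun _ => ℤ)).tsum_eq F]
        exact tsum_congr fun c => rfl
    _ = ∑' (z : ℤ), ∑' (v : Fin n → ℤ), F (Fin.snoc v z) :=
        ENNReal.tsum_prod (f := fun z v => F (Fin.snoc v z))
    _ = ∑' (v : Fin n → ℤ), ∑' (z : ℤ), F (Fin.snoc v z) := ENNReal.tsum_comm

lemma Wt_default : Wt (default : Fin 0 → ℤ) = 1 := by
  unfold Wt
  simp

lemma base_aliveP {x y : ℕ} (hx : 1 ≤ x) (hy : 1 ≤ y) : aliveP x y (default : Fin 0 → ℤ) := by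
  intro m hm
  interval_cases m
  rw [wOf_zero]
  exact ⟨by omega, by omega⟩

lemma base_not_winP {x y : ℕ} (hy : 1 ≤ y) : ¬ winP x y (default : Fin 0 → ℤ) := by
  rintro ⟨j, hj, hlow, -⟩
  interval_cases j
  rw [wOf_zero] at hlow
  omega

lemma invariant (x y : ℕ) (hx : 1 ≤ x) (hy : 1 ≤ y) :
    ∀ n, WinS x y n + AliveH x y n = hfun x y 0 := by
  intro n
  induction n with
  | zero =>
    unfold WinS AliveH
    rw [tsum_eq_single (default : Fin 0 → ℤ) (fun v hv => absurd (Subsingleton.elim v default) hv)]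
    rw [tsum_eq_single (default : Fin 0 → ℤ) (fun v hv => absurd (Subsingleton.elim v default) hv)]
    rw [if_neg (base_not_winP hy), if_pos (base_aliveP hx hy), Wt_default, wOf_zero, one_mul, zero_add]
  | succ n ih =>
    classical
    unfold WinS AliveH
    rw [tsum_snoc, tsum_snoc, ← ENNReal.tsum_add]
    have hkey : ∀ v : Fin n → ℤ,
        (∑' z : ℤ, ((if winP x y (Fin.snoc v z) then Wt (Fin.snoc v z) else 0)))
          + (∑' z : ℤ, (if aliveP x y (Fin.snoc v z) then
              Wt (Fin.snoc v z) * hfun x y (wOf (Fin.snoc v z) (n+1)) else 0))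
        = (if winP x y v then Wt v else 0)
          + (if aliveP x y v then Wt v * hfun x y (wOf v n) else 0) := by
      intro v
      by_cases hWt : Wt v = 0
      · have hz : ∀ z : ℤ, Wt (Fin.snoc v z) = 0 := by
          intro z; rw [Wt_snoc, hWt, zero_mul]
        simp [hz, hWt]
      by_cases hwin : winP x y v
      · have hnal : ¬ aliveP x y v := fun ha => not_winP_of_aliveP ha hwin
        have h1 : ∀ z : ℤ, (if winP x y (Fin.snoc v z) then Wt (Fin.snoc v z) else 0)
            = Wt v * animalStepLaw z := by
          intro z
          rw [if_pos ((winP_snoc v z).2 (Or.inl hwin)), Wt_snoc]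
        have h2 : ∀ z : ℤ, (if aliveP x y (Fin.snoc v z) then
              Wt (Fin.snoc v z) * hfun x y (wOf (Fin.snoc v z) (n+1)) else 0) = 0 := by
          intro z
          rw [if_neg (fun ha => hnal ((aliveP_snoc v z).1 ha).1)]
        simp only [h1, h2, tsum_zero, add_zero]
        rw [ENNReal.tsum_mul_left, sum_mu, mul_one, if_pos hwin, if_neg hnal, add_zero]
      by_cases hal : aliveP x y v
      · -- alive case: use harmonicity
        set a : ℤ := wOf v n with ha
        have haly : -(y:ℤ) < a := (hal n (le_refl n)).1
        have halx : a < (x:ℤ) := alive_lt hx hal hWt n (le_refl n)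
        have h1 : ∀ z : ℤ,
            ((if winP x y (Fin.snoc v z) then Wt (Fin.snoc v z) else 0))
            + (if aliveP x y (Fin.snoc v z) then
                Wt (Fin.snoc v z) * hfun x y (wOf (Fin.snoc v z) (n+1)) else 0)
            = Wt v * (animalStepLaw z * hfun x y (a + z)) := by
          intro z
          rw [Wt_snoc, wOf_snoc_succ]
          by_cases hlow : a + z ≤ -(y:ℤ)
          · rw [if_pos ((winP_snoc v z).2 (Or.inr ⟨hal, hlow⟩))]
            rw [if_neg (fun hsa => by
              have := ((aliveP_snoc v z).1 hsa).2.1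
              omega)]
            rw [add_zero]
            unfold hfun
            rw [if_pos hlow, mul_one]
          · by_cases hok : okP x y (a + z)
            · rw [if_neg (fun hsw => by
                rcases (winP_snoc v z).1 hsw with h | h
                · exact not_winP_of_aliveP hal h
                · omega)]
              rw [if_pos ((aliveP_snoc v z).2 ⟨hal, hok⟩), zero_add, mul_assoc]
            · have hx0 : a + z = (x:ℤ) := by
                unfold okP at hok
                push_neg at hok
                exact hok (by omega)
              rw [if_neg (fun hsw => by
                rcases (winP_snoc v z).1 hsw with h | h
                · exact not_winP_of_aliveP hal h
                · omega)]
              rw [if_neg (fun hsa => hok ((aliveP_snoc v z).1 hsa).2)]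
              rw [hx0]
              unfold hfun
              rw [if_neg (by omega)]
              rw [show ((x:ℤ) - (x:ℤ)).toNat = 0 by omega]
              simp
        rw [← ENNReal.tsum_add]
        simp only [h1]
        rw [ENNReal.tsum_mul_left, harmonic x y hy a haly halx]
        rw [if_neg (not_winP_of_aliveP hal), if_pos hal, zero_add]
      · -- dead case
        have h1 : ∀ z : ℤ, (if winP x y (Fin.snoc v z) then Wt (Fin.snoc v z) else 0) = 0 := by
          intro z
          rw [if_neg (fun hsw => by
            rcases (winP_snoc v z).1 hsw with h | h
            · exact hwin h
            · exact hal h.1)]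
        have h2 : ∀ z : ℤ, (if aliveP x y (Fin.snoc v z) then
              Wt (Fin.snoc v z) * hfun x y (wOf (Fin.snoc v z) (n+1)) else 0) = 0 := by
          intro z
          rw [if_neg (fun hsa => hal ((aliveP_snoc v z).1 hsa).1)]
        simp [h1, h2, hwin, hal]
    calc ∑' v : Fin n → ℤ, ((∑' z : ℤ, (if winP x y (Fin.snoc v z) then Wt (Fin.snoc v z) else 0))
          + ∑' z : ℤ, (if aliveP x y (Fin.snoc v z) then
              Wt (Fin.snoc v z) * hfun x y (wOf (Fin.snoc v z) (n+1)) else 0))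
        = ∑' v : Fin n → ℤ, ((if winP x y v then Wt v else 0)
          + (if aliveP x y v then Wt v * hfun x y (wOf v n) else 0)) := by
          exact tsum_congr hkey
      _ = hfun x y 0 := by
          rw [ENNReal.tsum_add]
          exact ih

end Animal

namespace Animal

lemma AliveH_le_AliveS (x y n : ℕ) : AliveH x y n ≤ AliveS x y n := by
  classical
  unfold AliveH AliveS
  apply ENNReal.tsum_le_tsum
  intro v
  split_ifs with h
  · calc Wt v * hfun x y (wOf v n) ≤ Wt v * 1 := mul_le_mul_right (hfun_le_one x y _) _
      _ = Wt v := mul_one _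
  · exact le_refl 0

noncomputable def rr (x y : ℕ) : ENNReal :=
  ∑' z : ℤ, if z = -((x:ℤ)+y) then 0 else animalStepLaw z

lemma rr_add (x y : ℕ) : animalStepLaw (-((x:ℤ)+y)) + rr x y = 1 := by
  rw [← sum_mu]
  unfold rr
  have := (ENNReal.tsum_eq_add_tsum_ite (f := animalStepLaw) (-((x:ℤ)+y))).symm
  convert this using 3
  funext z
  congr

lemma bad_pos (x y : ℕ) (hx : 1 ≤ x) : animalStepLaw (-((x:ℤ)+y)) ≠ 0 := by
  have hneg : -((x:ℤ)+y) = Int.negSucc (x + y - 1) := by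
    rw [Int.negSucc_eq]
    push_cast
    omega
  rw [hneg, stepLaw_negSucc]
  intro h
  rw [ENNReal.div_eq_zero_iff] at h
  rcases h with h | h
  · exact pow_ne_zero _ (ENNReal.inv_ne_zero.2 (by norm_num)) h
  · norm_num at h

lemma rr_lt_one (x y : ℕ) (hx : 1 ≤ x) : rr x y < 1 := by
  have h := rr_add x y
  have hle : rr x y ≤ 1 := by
    rw [← h]; exact le_add_self
  have hnt : rr x y ≠ ⊤ := fun ht => by rw [ht] at hle; simp at hle
  rw [← h]
  rw [add_comm]
  exact ENNReal.lt_add_right hnt (bad_pos x y hx)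

lemma AliveS_le (x y : ℕ) (hx : 1 ≤ x) (hy : 1 ≤ y) :
    ∀ n, AliveS x y n ≤ (rr x y) ^ n := by
  classical
  intro n
  induction n with
  | zero =>
    unfold AliveS
    rw [tsum_eq_single (default : Fin 0 → ℤ) (fun v hv => absurd (Subsingleton.elim v default) hv)]
    rw [if_pos (base_aliveP hx hy), Wt_default, pow_zero]
  | succ n ih =>
    unfold AliveS
    rw [tsum_snoc]
    have hpt : ∀ (v : Fin n → ℤ) (z : ℤ),
        (if aliveP x y (Fin.snoc v z) then Wt (Fin.snoc v z) else 0)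
        ≤ (if aliveP x y v then Wt v else 0) * (if z = -((x:ℤ)+y) then 0 else animalStepLaw z) := by
      intro v z
      by_cases hsa : aliveP x y (Fin.snoc v z)
      · have hav : aliveP x y v := ((aliveP_snoc v z).1 hsa).1
        rw [if_pos hsa, if_pos hav, Wt_snoc]
        by_cases hbad : z = -((x:ℤ)+y)
        · rw [if_pos hbad]
          by_cases hWt : Wt v = 0
          · rw [hWt, zero_mul, zero_mul]
          · exfalso
            have halx : wOf v n < (x:ℤ) := alive_lt hx hav hWt n (le_refl n)
            have hok := ((aliveP_snoc v z).1 hsa).2.1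
            omega
        · rw [if_neg hbad]
      · rw [if_neg hsa]
        exact zero_le
    calc ∑' (v : Fin n → ℤ), ∑' (z : ℤ),
          (if aliveP x y (Fin.snoc v z) then Wt (Fin.snoc v z) else 0)
        ≤ ∑' (v : Fin n → ℤ), ∑' (z : ℤ),
            (if aliveP x y v then Wt v else 0) * (if z = -((x:ℤ)+y) then 0 else animalStepLaw z) := by
          exact ENNReal.tsum_le_tsum fun v => ENNReal.tsum_le_tsum fun z => hpt v z
      _ = ∑' (v : Fin n → ℤ), (if aliveP x y v then Wt v else 0) * rr x y := by
          exact tsum_congr fun v => ENNReal.tsum_mul_left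
      _ = AliveS x y n * rr x y := ENNReal.tsum_mul_right
      _ ≤ (rr x y) ^ n * rr x y := mul_le_mul_left ih _
      _ = (rr x y) ^ (n+1) := (pow_succ _ _).symm

lemma WinS_le (x y : ℕ) (hx : 1 ≤ x) (hy : 1 ≤ y) (n : ℕ) : WinS x y n ≤ hfun x y 0 := by
  rw [← invariant x y hx hy n]
  exact le_add_right (le_refl _)

lemma hfun_le_WinS_add (x y : ℕ) (hx : 1 ≤ x) (hy : 1 ≤ y) (n : ℕ) :
    hfun x y 0 ≤ WinS x y n + (rr x y) ^ n := by
  rw [← invariant x y hx hy n]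
  exact add_le_add (le_refl _) ((AliveH_le_AliveS x y n).trans (AliveS_le x y hx hy n))

lemma iSup_WinS (x y : ℕ) (hx : 1 ≤ x) (hy : 1 ≤ y) :
    ⨆ n, WinS x y n = hfun x y 0 := by
  apply le_antisymm
  · exact iSup_le fun n => WinS_le x y hx hy n
  · apply ENNReal.le_of_forall_pos_le_add
    intro ε hε _
    have htend := ENNReal.tendsto_pow_atTop_nhds_zero_of_lt_one (rr_lt_one x y hx)
    have hev : ∀ᶠ n in Filter.atTop, (rr x y) ^ n < (ε : ENNReal) := by
      apply htend.eventually_lt_const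
      exact_mod_cast hε
    obtain ⟨n, hn⟩ := hev.exists
    calc hfun x y 0 ≤ WinS x y n + (rr x y) ^ n := hfun_le_WinS_add x y hx hy n
      _ ≤ (⨆ m, WinS x y m) + (ε : ENNReal) := add_le_add (le_iSup _ n) hn.le

end Animal

namespace Animal

section Prob

variable {Ω : Type*} [MeasurableSpace Ω] (P : Measure Ω) [IsProbabilityMeasure P]
    (ξ : ℕ → Ω → ℤ)

lemma cyl_measurable (hmeas : ∀ i, Measurable (ξ i)) (n : ℕ) (v : Fin n → ℤ) :
    MeasurableSet {ω | ∀ i : Fin n, ξ (i:ℕ) ω = v i} := by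
  have : {ω | ∀ i : Fin n, ξ (i:ℕ) ω = v i} = ⋂ i : Fin n, (ξ (i:ℕ)) ⁻¹' {v i} := by
    ext ω; simp [Set.mem_iInter]
  rw [this]
  exact MeasurableSet.iInter fun i => (hmeas i) (measurableSet_singleton _)

lemma cyl_measure (hindep : ProbabilityTheory.iIndepFun ξ P)
    (hlaw : ∀ i, ∀ z : ℤ, P {ω | ξ i ω = z} = animalStepLaw z) (n : ℕ) (v : Fin n → ℤ) :
    P {ω | ∀ i : Fin n, ξ (i:ℕ) ω = v i} = Wt v := by
  classical
  set sets : ℕ → Set ℤ := fun i => if h : i < n then {v ⟨i, h⟩} else Set.univ with hsets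
  have hset : {ω | ∀ i : Fin n, ξ (i:ℕ) ω = v i} = ⋂ i ∈ Finset.range n, ξ i ⁻¹' sets i := by
    ext ω
    simp only [Set.mem_setOf_eq, Set.mem_iInter, Finset.mem_range, Set.mem_preimage, hsets]
    constructor
    · intro h i hi
      rw [dif_pos hi]
      exact h ⟨i, hi⟩
    · intro h i
      have := h (i:ℕ) i.isLt
      rwa [dif_pos i.isLt] at this
  rw [hset]
  rw [hindep.measure_inter_preimage_eq_mul (Finset.range n)
    (fun i _ => by
      by_cases h : i < n
      · simp only [hsets]; rw [dif_pos h]; exact measurableSet_singleton _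
      · simp only [hsets]; rw [dif_neg h]; exact MeasurableSet.univ)]
  have hterm : ∀ i ∈ Finset.range n, P (ξ i ⁻¹' sets i)
      = animalStepLaw (if h : i < n then v ⟨i, h⟩ else 0) := by
    intro i hi
    have hin : i < n := Finset.mem_range.1 hi
    rw [dif_pos hin]
    simp only [hsets]
    rw [dif_pos hin]
    exact hlaw i (v ⟨i, hin⟩)
  rw [Finset.prod_congr rfl hterm]
  unfold Wt
  rw [← Fin.prod_univ_eq_prod_range (fun i => animalStepLaw (if h : i < n then v ⟨i, h⟩ else 0)) n]
  apply Finset.prod_congr rfl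
  intro i _
  rw [dif_pos i.isLt]

lemma event_measure (hmeas : ∀ i, Measurable (ξ i))
    (hindep : ProbabilityTheory.iIndepFun ξ P)
    (hlaw : ∀ i, ∀ z : ℤ, P {ω | ξ i ω = z} = animalStepLaw z) (x y n : ℕ) :
    P {ω | winP x y (fun i : Fin n => ξ (i:ℕ) ω)} = WinS x y n := by
  classical
  set S : (Fin n → ℤ) → Set Ω :=
    fun v => if winP x y v then {ω | ∀ i : Fin n, ξ (i:ℕ) ω = v i} else ∅ with hS
  have hunion : {ω | winP x y (fun i : Fin n => ξ (i:ℕ) ω)} = ⋃ v, S v := by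
    ext ω
    simp only [Set.mem_setOf_eq, Set.mem_iUnion, hS]
    constructor
    · intro h
      refine ⟨fun i => ξ (i:ℕ) ω, ?_⟩
      rw [if_pos h]
      exact fun i => rfl
    · rintro ⟨v, hv⟩
      by_cases hw : winP x y v
      · rw [if_pos hw] at hv
        have : (fun i : Fin n => ξ (i:ℕ) ω) = v := funext hv
        rwa [this]
      · rw [if_neg hw] at hv
        exact absurd hv (Set.notMem_empty ω)
  have hdisj : Pairwise (Function.onFun Disjoint S) := by
    intro v w hvw
    simp only [Function.onFun, hS]
    by_cases hv : winP x y v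
    · by_cases hw : winP x y w
      · rw [if_pos hv, if_pos hw]
        rw [Set.disjoint_left]
        intro ω h1 h2
        exact hvw (funext fun i => (h1 i).symm.trans (h2 i))
      · rw [if_neg hw]; exact disjoint_bot_right
    · rw [if_neg hv]; exact disjoint_bot_left
  have hmeasS : ∀ v, MeasurableSet (S v) := by
    intro v
    simp only [hS]
    by_cases hw : winP x y v
    · rw [if_pos hw]; exact cyl_measurable ξ hmeas n v
    · rw [if_neg hw]; exact MeasurableSet.empty
  rw [hunion, measure_iUnion hdisj hmeasS]
  unfold WinS
  apply tsum_congr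
  intro v
  simp only [hS]
  by_cases hw : winP x y v
  · rw [if_pos hw, if_pos hw, cyl_measure P ξ hindep hlaw n v]
  · rw [if_neg hw, if_neg hw, measure_empty]

end Prob

end Animal

namespace Animal

lemma wOf_walk {Ω : Type*} (ξ : ℕ → Ω → ℤ) (ω : Ω) (n m : ℕ) (h : m ≤ n) :
    wOf (fun i : Fin n => ξ (i:ℕ) ω) m = walk ξ m ω := by
  unfold wOf walk
  rw [Fin.sum_univ_eq_sum_range (fun i => if i < m then ξ i ω else 0) n]
  rw [← Finset.sum_subset (Finset.range_subset_range.2 h)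
    (fun i _ hni => by rw [if_neg (by simp at hni ⊢; omega)])]
  apply Finset.sum_congr rfl
  intro i hi
  rw [if_pos (Finset.mem_range.1 hi)]

end Animal

open Animal in
/-- exit problem for the animal walk. Let (S_n) be the animal walk
started at 0 (with i.i.d. increments of law μ). For all integers y ≥ 1 and x ≥ 0,
the probability that S enters (−∞,−y] strictly before reaching {x} equals
x/(x+y+1). -/
theorem animal_walk_exit_problem
    {Ω : Type*} [MeasurableSpace Ω] (P : Measure Ω) [IsProbabilityMeasure P]
    (ξ : ℕ → Ω → ℤ) (hmeas : ∀ i, Measurable (ξ i))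
    (hindep : ProbabilityTheory.iIndepFun ξ P)
    (hlaw : ∀ i, ∀ z : ℤ, P {ω | ξ i ω = z} = animalStepLaw z)
    (x y : ℕ) (hy : 1 ≤ y) :
    P {ω | ∃ n : ℕ, walk ξ n ω ≤ -(y : ℤ) ∧ ∀ m ≤ n, walk ξ m ω ≠ (x : ℤ)} =
      (x : ENNReal) / ((x : ENNReal) + (y : ENNReal) + 1) := by
  have hwalk0 : ∀ ω : Ω, walk ξ 0 ω = 0 := fun ω => by
    unfold walk; simp
  by_cases hx : 1 ≤ x
  swap
  · -- x = 0 : the event is empty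
    have hx0 : x = 0 := by omega
    subst hx0
    have hempty : {ω : Ω | ∃ n : ℕ, walk ξ n ω ≤ -(y : ℤ) ∧ ∀ m ≤ n, walk ξ m ω ≠ ((0:ℕ) : ℤ)} = ∅ := by
      ext ω
      simp only [Set.mem_setOf_eq, Set.mem_empty_iff_false, iff_false]
      rintro ⟨n, -, hne⟩
      exact hne 0 (Nat.zero_le n) (by rw [hwalk0]; norm_num)
    rw [hempty, measure_empty]
    norm_num
  · -- main case
    have hEA : {ω : Ω | ∃ n : ℕ, walk ξ n ω ≤ -(y : ℤ) ∧ ∀ m ≤ n, walk ξ m ω ≠ (x : ℤ)}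
        = ⋃ n : ℕ, {ω : Ω | winP x y (fun i : Fin n => ξ (i:ℕ) ω)} := by
      ext ω
      simp only [Set.mem_setOf_eq, Set.mem_iUnion]
      constructor
      · rintro ⟨n, hlow, hne⟩
        have hex : ∃ j, walk ξ j ω ≤ -(y:ℤ) ∧ j ≤ n := ⟨n, hlow, le_refl n⟩
        classical
        have hex' : ∃ j, walk ξ j ω ≤ -(y:ℤ) := ⟨n, hlow⟩
        set j := Nat.find hex' with hj
        have hjspec := Nat.find_spec hex'
        have hjle : j ≤ n := Nat.find_le hlow
        refine ⟨j, j, le_refl j, ?_, ?_⟩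
        · rwa [wOf_walk ξ ω j j (le_refl j)]
        · intro m hm
          rw [wOf_walk ξ ω j m (le_of_lt hm)]
          constructor
          · have := Nat.find_min hex' hm
            omega
          · exact hne m (by omega)
      · rintro ⟨n, j, hjn, hlow, hpre⟩
        rw [wOf_walk ξ ω n j hjn] at hlow
        refine ⟨j, hlow, ?_⟩
        intro m hm
        rcases Nat.lt_or_ge m j with h1 | h1
        · have := (hpre m h1).2
          rwa [wOf_walk ξ ω n m (by omega)] at this
        · have : m = j := by omega
          subst this
          intro hcon
          rw [hcon] at hlow
          omega
    rw [hEA]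
    have hmono : Monotone (fun n => {ω : Ω | winP x y (fun i : Fin n => ξ (i:ℕ) ω)}) := by
      intro n n' hnn' ω hω
      obtain ⟨j, hj, hlow, hpre⟩ := hω
      refine ⟨j, by omega, ?_, ?_⟩
      · rw [wOf_walk ξ ω n' j (by omega)]
        rwa [wOf_walk ξ ω n j hj] at hlow
      · intro m hm
        have := hpre m hm
        rw [wOf_walk ξ ω n m (by omega)] at this
        rwa [wOf_walk ξ ω n' m (by omega)]
    rw [Directed.measure_iUnion hmono.directed_le]
    have hWS : ∀ n, P {ω : Ω | winP x y (fun i : Fin n => ξ (i:ℕ) ω)} = WinS x y n :=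
      fun n => event_measure P ξ hmeas hindep hlaw x y n
    simp only [hWS]
    rw [iSup_WinS x y hx hy]
    unfold hfun
    rw [if_neg (by omega)]
    rw [show ((x:ℤ) - 0).toNat = x by omega]
    push_cast
    rfl
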